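/- Let Γ₂ be the Christoffel symbol on ℝ² of Definition 1.10 (Γ_{11}¹ = 1/√2, Γ_{12}² = −1/√2, Γ_{22}¹ = −1/√2, symmetric in lower indices, other components 0), and let R_θ ∈ SO(2) be rotation by angle θ. Then R_θ acting on Γ₂ as a (2,1)-tensor fixes Γ₂ if and only if θ ∈ {0, 2π/3, 4π/3}; i.e. the orientation-preserving isotropy group of Γ₂ inside SO(2) is cyclic of order 3. -/
import Mathlib


open Matrix Real BigOperators

/-- The torsion-free Christoffel symbol `Γ₂` on `ℝ²` of Definition 1.10:
`Γ_{11}¹ = 1/√2`, `Γ_{12}² = Γ_{21}² = −1/√2`, `Γ_{22}¹ = −1/√2`, all other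
components zero. -/
noncomputable def gammaTwo : Fin 2 → Fin 2 → Fin 2 → ℝ :=
  ![![![1 / Real.sqrt 2, 0], ![0, -(1 / Real.sqrt 2)]],
    ![![0, -(1 / Real.sqrt 2)], ![-(1 / Real.sqrt 2), 0]]]

lemma rot_inv (θ : ℝ) :
    (!![Real.cos θ, Real.sin θ; -Real.sin θ, Real.cos θ])⁻¹
      = !![Real.cos θ, -Real.sin θ; Real.sin θ, Real.cos θ] := by
  apply Matrix.inv_eq_right_inv
  ext i j
  fin_cases i <;> fin_cases j <;>
    simp [Matrix.mul_apply, Fin.sum_univ_two] <;> nlinarith [Real.sin_sq_add_cos_sq θ]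

lemma verify_fix (θ : ℝ) (h3 : Real.cos θ ^ 3 * 4 - 3 * Real.cos θ = 1) :
    ∀ i j k, (∑ p, ∑ q, ∑ r,
      (!![Real.cos θ, Real.sin θ; -Real.sin θ, Real.cos θ]) p i *
      (!![Real.cos θ, Real.sin θ; -Real.sin θ, Real.cos θ]) q j *
      (!![Real.cos θ, -Real.sin θ; Real.sin θ, Real.cos θ]) k r * gammaTwo p q r)
        = gammaTwo i j k := by
  have hp := Real.sin_sq_add_cos_sq θ
  have hs : Real.sin θ * (4 * Real.cos θ ^ 2 - 1) = 0 := by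
    have hsq : (Real.sin θ * (4 * Real.cos θ ^ 2 - 1)) ^ 2 = 0 := by
      linear_combination (4 * Real.cos θ ^ 2 - 1) ^ 2 * hp
        - (1 + Real.cos θ) * (2 * Real.cos θ - 1) ^ 2 * h3
    exact sq_eq_zero_iff.mp hsq
  set a : ℝ := (Real.sqrt 2)⁻¹ with ha
  simp only [Fin.forall_fin_two]
  refine ⟨⟨⟨?_, ?_⟩, ?_, ?_⟩, ⟨?_, ?_⟩, ?_, ?_⟩ <;>
      simp [gammaTwo, Fin.sum_univ_two]
  · linear_combination a * h3 - 3 * Real.cos θ * a * hp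
  · linear_combination a * hs - Real.sin θ * a * hp
  · linear_combination a * hs - Real.sin θ * a * hp
  · linear_combination -a * h3 + 3 * Real.cos θ * a * hp
  · linear_combination a * hs - Real.sin θ * a * hp
  · linear_combination -a * h3 + 3 * Real.cos θ * a * hp
  · linear_combination -a * h3 + 3 * Real.cos θ * a * hp
  · linear_combination -a * hs + Real.sin θ * a * hp

/-- The rotation `R_θ ∈ SO(2)` fixes `Γ₂` under the `(2,1)`-tensor action
`(TΓ)_{ij}^k = ∑ T_{pi} T_{qj} (T⁻¹)_{kr} Γ_{pq}^r` if and only if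
`θ ∈ {0, 2π/3, 4π/3}` (for `0 ≤ θ < 2π`); i.e. the isotropy group of `Γ₂` inside
`SO(2)` is cyclic of order 3. -/
theorem stmt15 (θ : ℝ) (h0 : 0 ≤ θ) (h2π : θ < 2 * Real.pi) :
    let R : Matrix (Fin 2) (Fin 2) ℝ := !![Real.cos θ, Real.sin θ; -Real.sin θ, Real.cos θ]
    ((∀ i j k, (∑ p, ∑ q, ∑ r, R p i * R q j * R⁻¹ k r * gammaTwo p q r) = gammaTwo i j k)
      ↔ (θ = 0 ∨ θ = 2 * Real.pi / 3 ∨ θ = 4 * Real.pi / 3)) := by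
  intro R
  have hR : R⁻¹ = !![Real.cos θ, -Real.sin θ; Real.sin θ, Real.cos θ] := rot_inv θ
  rw [hR]
  constructor
  · intro h
    have h000 := h 0 0 0
    simp [gammaTwo, Fin.sum_univ_two, R] at h000
    have ha : ((Real.sqrt 2)⁻¹ : ℝ) ≠ 0 := by positivity
    have hz : (Real.cos θ ^ 3 - 3 * Real.cos θ * Real.sin θ ^ 2 - 1) * (Real.sqrt 2)⁻¹ = 0 := by
      linear_combination h000
    have h1 := (mul_eq_zero.mp hz).resolve_right ha
    have h3 : Real.cos (3 * θ) = 1 := by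
      rw [Real.cos_three_mul]
      linear_combination h1 + 3 * Real.cos θ * Real.sin_sq_add_cos_sq θ
    obtain ⟨n, hn⟩ := (Real.cos_eq_one_iff _).mp h3
    have hπ := Real.pi_pos
    have hn0 : (0 : ℤ) ≤ n := by
      by_contra hc
      push_neg at hc
      have : (n : ℝ) < 0 := by exact_mod_cast hc
      nlinarith
    have hn3 : n < 3 := by
      by_contra hc
      push_neg at hc
      have : (3 : ℝ) ≤ (n : ℝ) := by exact_mod_cast hc
      nlinarith
    interval_cases n
    · left; simp at hn; linarith
    · right; left; simp at hn; linarith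
    · right; right; push_cast at hn; linarith
  · intro h
    have h3 : Real.cos θ ^ 3 * 4 - 3 * Real.cos θ = 1 := by
      have := Real.cos_three_mul θ
      rcases h with rfl | rfl | rfl
      · rw [Real.cos_zero]; norm_num
      · have h2 : 3 * (2 * Real.pi / 3) = 2 * Real.pi := by ring
        rw [h2, Real.cos_two_pi] at this; linarith
      · have h2 : 3 * (4 * Real.pi / 3) = 2 * Real.pi + 2 * Real.pi := by ring
        rw [h2, Real.cos_add_two_pi, Real.cos_two_pi] at this; linarith
    exact verify_fix θ h3
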